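/- arXiv:1304.6244 — 2 statements merged into one kernel-verified Lean document; each statement's English description precedes it below -/
import Mathlib

section
/- Let X and Y be subspaces of F_q^{n+1}, neither contained in the hyperplane F_q^n, such that Y covers X. Then the bipartite graph of covering relations between the H(n+1,q)-orbit [Y] of Y and the orbit [X] of X is biregular: each element of [Y] covers exactly q elements of [X], and each element of [X] is covered by exactly one element of [Y]. -/
/-- The matrix `[[I, a], [0, 1]]` over `F`, indexed by `Fin n ⊕ Unit`. -/
def Hmat {F : Type} [Field F] {n : ℕ} (a : Fin n → F) :
    Matrix (Fin n ⊕ Unit) (Fin n ⊕ Unit) F :=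
  Matrix.fromBlocks 1 (Matrix.of fun i (_ : Unit) => a i) 0 1

/-- The action of the element `[[I, a], [0, 1]]` of `H(n+1, q)` on subspaces of
`F_q^{n+1}`. -/
def actH {F : Type} [Field F] {n : ℕ} (a : Fin n → F)
    (X : Submodule F (Fin n ⊕ Unit → F)) : Submodule F (Fin n ⊕ Unit → F) :=
  Submodule.map (Matrix.mulVecLin (Hmat a)) X

namespace HOrbitAux
variable {F : Type} [Field F] {n : ℕ}

def eLin : (Fin n → F) →ₗ[F] (Fin n ⊕ Unit → F) where
  toFun a := Sum.elim a 0
  map_add' a b := by funext i; cases i <;> simp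
  map_smul' c a := by funext i; cases i <;> simp

@[simp] lemma eLin_inl (a : Fin n → F) (i : Fin n) : eLin a (Sum.inl i) = a i := rfl
@[simp] lemma eLin_inr (a : Fin n → F) : eLin a (Sum.inr ()) = 0 := rfl

lemma eLin_injective : Function.Injective (eLin (F := F) (n := n)) := by
  intro a b h
  funext i
  have := congrFun h (Sum.inl i)
  simpa using this

def Tl (a : Fin n → F) : (Fin n ⊕ Unit → F) →ₗ[F] (Fin n ⊕ Unit → F) :=
  LinearMap.id + (LinearMap.smulRight (LinearMap.proj (Sum.inr ())) (eLin a))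

lemma Tl_apply (a : Fin n → F) (v : Fin n ⊕ Unit → F) :
    Tl a v = v + v (Sum.inr ()) • eLin a := rfl

@[simp] lemma Tl_apply_inr (a : Fin n → F) (v : Fin n ⊕ Unit → F) :
    Tl a v (Sum.inr ()) = v (Sum.inr ()) := by
  simp [Tl_apply]

lemma mulVecLin_Hmat (a : Fin n → F) : (Hmat a).mulVecLin = Tl a := by
  apply LinearMap.ext
  intro v
  funext i
  cases i with
  | inl i =>
      simp [Hmat, Matrix.mulVecLin_apply, Matrix.mulVec, dotProduct,
        Fintype.sum_sum_type, Matrix.fromBlocks, Matrix.one_apply, Tl_apply, mul_comm]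
  | inr u =>
      cases u
      simp [Hmat, Matrix.mulVecLin_apply, Matrix.mulVec, dotProduct,
        Fintype.sum_sum_type, Matrix.fromBlocks, Tl_apply]

lemma Tl_Tl (a b : Fin n → F) (v : Fin n ⊕ Unit → F) : Tl a (Tl b v) = Tl (a + b) v := by
  simp [Tl_apply, map_add, smul_add]
  module

lemma actH_eq_map (a : Fin n → F) (X : Submodule F (Fin n ⊕ Unit → F)) :
    actH a X = X.map (Tl a) := by
  rw [actH, mulVecLin_Hmat]

lemma actH_actH (a b : Fin n → F) (X : Submodule F (Fin n ⊕ Unit → F)) :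
    actH a (actH b X) = actH (a + b) X := by
  simp only [actH_eq_map]
  rw [← Submodule.map_comp]
  congr 1
  apply LinearMap.ext
  intro v
  exact Tl_Tl a b v

@[simp] lemma Tl_zero (v : Fin n ⊕ Unit → F) : Tl 0 v = v := by
  simp [Tl_apply, map_zero]

@[simp] lemma actH_zero (X : Submodule F (Fin n ⊕ Unit → F)) : actH 0 X = X := by
  rw [actH_eq_map]
  ext v
  constructor
  · rintro ⟨w, hw, rfl⟩; simpa using hw
  · intro hv; exact ⟨v, hv, by simp⟩

end HOrbitAux

namespace HOrbitAux
open Module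
variable {F : Type} [Field F] {n : ℕ}

lemma finrank_actH (a : Fin n → F) (X : Submodule F (Fin n ⊕ Unit → F)) :
    finrank F (actH a X) = finrank F X := by
  refine le_antisymm ?_ ?_
  · rw [actH_eq_map]; exact Submodule.finrank_map_le _ _
  · conv_lhs => rw [show X = actH (-a) (actH a X) by rw [actH_actH]; simp]
    rw [actH_eq_map]
    exact Submodule.finrank_map_le _ _

lemma actH_le_actH_iff (c : Fin n → F) {P Q : Submodule F (Fin n ⊕ Unit → F)} :
    actH c P ≤ actH c Q ↔ P ≤ Q := by
  constructor
  · intro h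
    have h2 : actH (-c) (actH c P) ≤ actH (-c) (actH c Q) := by
      rw [actH_eq_map (-c), actH_eq_map (-c)]
      exact Submodule.map_mono h
    rw [actH_actH, actH_actH] at h2
    simpa using h2
  · intro h
    rw [actH_eq_map, actH_eq_map]
    exact Submodule.map_mono h

lemma actH_eq_of_mem {c : Fin n → F} {Y : Submodule F (Fin n ⊕ Unit → F)}
    (h : eLin c ∈ Y) : actH c Y = Y := by
  rw [actH_eq_map]
  apply le_antisymm
  · rintro _ ⟨y, hy, rfl⟩
    rw [Tl_apply]
    exact Y.add_mem hy (Y.smul_mem _ h)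
  · intro y hy
    refine ⟨Tl (-c) y, ?_, by rw [Tl_Tl]; simp⟩
    rw [Tl_apply]
    exact Y.add_mem hy (Y.smul_mem _ (by simpa [map_neg] using Y.neg_mem h))

lemma eLin_mem_of_le {c : Fin n → F} {X Y : Submodule F (Fin n ⊕ Unit → F)}
    {v : Fin n ⊕ Unit → F} (hvX : v ∈ X) (hv1 : v (Sum.inr ()) = 1)
    (hXY : X ≤ Y) (h : X ≤ actH c Y) : eLin c ∈ Y := by
  rw [actH_eq_map] at h
  obtain ⟨w, hw, hwv⟩ := h hvX
  have hwt : w (Sum.inr ()) = 1 := by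
    have := congrFun hwv (Sum.inr ())
    rw [Tl_apply_inr] at this
    rw [this, hv1]
  have : eLin c = v - w := by
    rw [← hwv, Tl_apply, hwt, one_smul]
    abel
  rw [this]
  exact Y.sub_mem (hXY hvX) hw

lemma actH_eq_self_iff {c : Fin n → F} {X : Submodule F (Fin n ⊕ Unit → F)}
    {v : Fin n ⊕ Unit → F} (hvX : v ∈ X) (hv1 : v (Sum.inr ()) = 1) :
    actH c X = X ↔ eLin c ∈ X := by
  constructor
  · intro h
    exact eLin_mem_of_le hvX hv1 le_rfl (le_of_eq h.symm)
  · exact actH_eq_of_mem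

end HOrbitAux

namespace HOrbitAux
open Module
variable {F : Type} [Field F] {n : ℕ}

lemma range_eLin : LinearMap.range (eLin (F := F) (n := n)) =
    LinearMap.ker (LinearMap.proj (R := F) (Sum.inr () : Fin n ⊕ Unit)) := by
  ext w
  simp only [LinearMap.mem_range, LinearMap.mem_ker, LinearMap.proj_apply]
  constructor
  · rintro ⟨a, rfl⟩; simp
  · intro hw
    refine ⟨fun i => w (Sum.inl i), ?_⟩
    funext i
    cases i with
    | inl i => rfl
    | inr u => cases u; simpa using hw.symm

lemma finrank_total : finrank F (Fin n ⊕ Unit → F) = n + 1 := by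
  simp [Module.finrank_pi]

lemma finrank_comap_add_one {Z : Submodule F (Fin n ⊕ Unit → F)}
    (hZ : ¬ Z ≤ LinearMap.ker (LinearMap.proj (R := F) (Sum.inr () : Fin n ⊕ Unit))) :
    finrank F (Z.comap (eLin (F := F) (n := n))) + 1 = finrank F Z := by
  set Hy : Submodule F (Fin n ⊕ Unit → F) :=
    LinearMap.ker (LinearMap.proj (R := F) (Sum.inr () : Fin n ⊕ Unit)) with hHy
  have hrange : LinearMap.range (eLin (F := F) (n := n)) = Hy := range_eLin
  have hHyfin : finrank F Hy = n := by
    rw [← hrange, LinearMap.finrank_range_of_inj eLin_injective]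
    simp [Module.finrank_pi]
  have htot : finrank F (Fin n ⊕ Unit → F) = n + 1 := finrank_total
  have hlt : Hy < Z ⊔ Hy :=
    lt_of_le_of_ne le_sup_right (fun h => hZ (le_sup_left.trans h.symm.le))
  have hsup : Z ⊔ Hy = ⊤ := by
    apply Submodule.eq_top_of_finrank_eq
    have h2 := Submodule.finrank_lt_finrank_of_lt hlt
    have h3 := Submodule.finrank_le (Z ⊔ Hy)
    rw [hHyfin] at h2
    rw [htot] at h3
    rw [htot]
    omega
  have hkey := Submodule.finrank_sup_add_finrank_inf_eq Z Hy
  rw [hsup, finrank_top, htot, hHyfin] at hkey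
  have hm : Submodule.map (eLin (F := F) (n := n)) (Z.comap eLin) = Z ⊓ Hy := by
    rw [Submodule.map_comap_eq, hrange, inf_comm]
  have hcomap : finrank F (Z.comap (eLin (F := F) (n := n))) = finrank F ↥(Z ⊓ Hy) := by
    rw [(Submodule.equivMapOfInjective eLin eLin_injective (Z.comap eLin)).finrank_eq, hm]
  omega

end HOrbitAux


set_option maxHeartbeats 1000000 in
set_option synthInstance.maxHeartbeats 400000 in
open HOrbitAux Module in
/-- biregularity -/
theorem H_orbits_covering_biregular (F : Type) [Field F] [Fintype F] (n : ℕ)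
    (Hyp : Submodule F (Fin n ⊕ Unit → F))
    (hHyp : Hyp = LinearMap.ker (LinearMap.proj (R := F) (Sum.inr () : Fin n ⊕ Unit)))
    (X Y : Submodule F (Fin n ⊕ Unit → F))
    (hX : ¬ X ≤ Hyp) (hY : ¬ Y ≤ Hyp)
    (hcov : X < Y ∧ Module.finrank F ↥Y = Module.finrank F ↥X + 1) :
    (∀ Y' : Submodule F (Fin n ⊕ Unit → F), (∃ a : Fin n → F, Y' = actH a Y) →
      Nat.card {X' : Submodule F (Fin n ⊕ Unit → F) //
        (∃ a : Fin n → F, X' = actH a X) ∧ X' < Y' ∧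
          Module.finrank F ↥Y' = Module.finrank F ↥X' + 1} = Fintype.card F) ∧
    (∀ X' : Submodule F (Fin n ⊕ Unit → F), (∃ a : Fin n → F, X' = actH a X) →
      Nat.card {Y' : Submodule F (Fin n ⊕ Unit → F) //
        (∃ a : Fin n → F, Y' = actH a Y) ∧ X' < Y' ∧
          Module.finrank F ↥Y' = Module.finrank F ↥X' + 1} = 1) := by
  classical
  obtain ⟨hltXY, hrk⟩ := hcov
  have hXY : X ≤ Y := hltXY.le
  subst hHyp
  obtain ⟨v, hvX, hvt⟩ := SetLike.not_le_iff_exists.mp hX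
  simp only [LinearMap.mem_ker, LinearMap.proj_apply] at hvt
  set v₁ : Fin n ⊕ Unit → F := (v (Sum.inr ()))⁻¹ • v with hv₁
  have hv₁X : v₁ ∈ X := X.smul_mem _ hvX
  have hv₁t : v₁ (Sum.inr ()) = 1 := by
    simp only [hv₁, Pi.smul_apply, smul_eq_mul]
    exact inv_mul_cancel₀ hvt
  -- every element of the orbit of X has the finrank of X, etc.
  have hne0 : ∀ a b : Fin n → F, actH a X ≠ actH b Y := by
    intro a b h
    have h2 : finrank F ↥(actH a X) = finrank F ↥(actH b Y) := by rw [h]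
    rw [finrank_actH, finrank_actH, hrk] at h2
    omega
  -- key characterization : actH a X ≤ actH b Y ↔ eLin (b - a) ∈ Y
  have hkey : ∀ a b : Fin n → F, actH a X ≤ actH b Y ↔ eLin (b - a) ∈ Y := by
    intro a b
    constructor
    · intro hle
      have h1 : actH (-a) (actH a X) ≤ actH (-a) (actH b Y) :=
        (actH_le_actH_iff (-a)).mpr hle
      rw [actH_actH, actH_actH, neg_add_cancel, actH_zero] at h1
      have := eLin_mem_of_le hv₁X hv₁t hXY h1
      rwa [neg_add_eq_sub] at this
    · intro hmem
      have hfix : actH (b - a) Y = Y := actH_eq_of_mem hmem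
      have h1 : X ≤ actH (b - a) Y := by rw [hfix]; exact hXY
      have h2 := (actH_le_actH_iff a).mpr h1
      rwa [actH_actH, show a + (b - a) = b by abel] at h2
  -- stabilizer characterization
  have hstab : ∀ c : Fin n → F, actH c X = X ↔ eLin c ∈ X :=
    fun c => actH_eq_self_iff hv₁X hv₁t
  refine ⟨?_, ?_⟩
  · -- part 1
    rintro Y' ⟨b, rfl⟩
    have hchar : ∀ X' : Submodule F (Fin n ⊕ Unit → F),
        ((∃ a, X' = actH a X) ∧ X' < actH b Y ∧
          finrank F ↥(actH b Y) = finrank F ↥X' + 1) ↔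
        (∃ a, X' = actH a X ∧ eLin (b - a) ∈ Y) := by
      intro X'
      constructor
      · rintro ⟨⟨a, rfl⟩, hlt', -⟩
        exact ⟨a, rfl, (hkey a b).mp hlt'.le⟩
      · rintro ⟨a, rfl, hmem⟩
        exact ⟨⟨a, rfl⟩, lt_of_le_of_ne ((hkey a b).mpr hmem) (hne0 a b),
          by rw [finrank_actH, finrank_actH, hrk]⟩
    rw [Nat.card_congr (Equiv.subtypeEquivRight hchar)]
    -- quotient space
    set Ybar : Submodule F (Fin n → F) := Y.comap eLin with hYbar
    set Xbar : Submodule F (Fin n → F) := X.comap eLin with hXbar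
    have hbar : Xbar ≤ Ybar := Submodule.comap_mono hXY
    set Sub : Submodule F ↥Ybar := Xbar.comap Ybar.subtype with hSubdef
    have hmemSub : ∀ z : Ybar, z ∈ Sub ↔ eLin (z : Fin n → F) ∈ X := by
      intro z
      simp [hSubdef, hXbar, Submodule.mem_comap]
    -- the map from Ybar to the subtype
    have hfmem : ∀ c : Ybar, eLin (b - ((c : Fin n → F) + b)) ∈ Y := by
      intro c
      have hcY : eLin (c : Fin n → F) ∈ Y := by
        exact Submodule.mem_comap.mp c.2
      have : eLin (b - ((c : Fin n → F) + b)) = - eLin (c : Fin n → F) := by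
        rw [← map_neg]
        congr 1
        abel
      rw [this]
      exact Y.neg_mem hcY
    set f : Ybar → {X' : Submodule F (Fin n ⊕ Unit → F) //
        ∃ a, X' = actH a X ∧ eLin (b - a) ∈ Y} :=
      fun c => ⟨actH ((c : Fin n → F) + b) X, (c : Fin n → F) + b, rfl, hfmem c⟩ with hf
    have hcompat : ∀ c c' : Ybar, Sub.quotientRel c c' → f c = f c' := by
      intro c c' hcc
      rw [Submodule.quotientRel_def, hmemSub] at hcc
      have hcc2 : eLin ((c : Fin n → F) - (c' : Fin n → F)) ∈ X := by
        rwa [AddSubgroupClass.coe_sub] at hcc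
      have hfix : actH ((c : Fin n → F) - (c' : Fin n → F)) X = X := (hstab _).mpr hcc2
      apply Subtype.ext
      show actH ((c : Fin n → F) + b) X = actH ((c' : Fin n → F) + b) X
      conv_lhs => rw [show (c : Fin n → F) + b =
        ((c' : Fin n → F) + b) + ((c : Fin n → F) - (c' : Fin n → F)) by abel]
      rw [← actH_actH, hfix]
    have hcard2 : Nat.card {X' : Submodule F (Fin n ⊕ Unit → F) //
        ∃ a, X' = actH a X ∧ eLin (b - a) ∈ Y} = Nat.card (Ybar ⧸ Sub) := by
      symm
      apply Nat.card_congr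
      refine Equiv.ofBijective (Quotient.lift f hcompat) ⟨?_, ?_⟩
      · intro q q'
        obtain ⟨c, rfl⟩ := Submodule.Quotient.mk_surjective Sub q
        obtain ⟨c', rfl⟩ := Submodule.Quotient.mk_surjective Sub q'
        intro h
        have h2 : f c = f c' := h
        have h3 : actH ((c : Fin n → F) + b) X = actH ((c' : Fin n → F) + b) X :=
          congrArg Subtype.val h2
        apply (Submodule.Quotient.eq Sub).mpr
        rw [hmemSub]
        have h4 : actH (((c : Fin n → F) + b) - ((c' : Fin n → F) + b)) X = X := by
          have h5 := (actH_le_actH_iff (-((c' : Fin n → F) + b))).mpr h3.le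
          have h6 := (actH_le_actH_iff (-((c' : Fin n → F) + b))).mpr h3.ge
          rw [actH_actH, actH_actH, neg_add_cancel, actH_zero] at h5 h6
          have h7 := le_antisymm h5 h6
          rwa [show -((c' : Fin n → F) + b) + ((c : Fin n → F) + b) =
            ((c : Fin n → F) + b) - ((c' : Fin n → F) + b) by abel] at h7
        have h8 := (hstab _).mp h4
        rw [AddSubgroupClass.coe_sub]
        rwa [show ((c : Fin n → F) + b) - ((c' : Fin n → F) + b) =
          (c : Fin n → F) - c' by abel] at h8
      · rintro ⟨X', a, rfl, hmem⟩
        have haY : eLin (a - b) ∈ Y := by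
          have := Y.neg_mem hmem
          rwa [← map_neg, neg_sub] at this
        refine ⟨Submodule.Quotient.mk ⟨a - b, ?_⟩, ?_⟩
        · rw [hYbar, Submodule.mem_comap]; exact haY
        · apply Subtype.ext
          show actH ((a - b) + b) X = actH a X
          rw [sub_add_cancel]
    rw [hcard2]
    -- now compute the cardinality of the quotient
    have hfr1 : finrank F Xbar + 1 = finrank F X := finrank_comap_add_one hX
    have hfr2 : finrank F Ybar + 1 = finrank F Y := finrank_comap_add_one hY
    have hfrSub : finrank F Sub = finrank F Xbar :=
      (Submodule.comapSubtypeEquivOfLe hbar).finrank_eq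
    have hq := Submodule.finrank_quotient_add_finrank Sub
    have hfrQ : finrank F (Ybar ⧸ Sub) = 1 := by
      rw [hfrSub] at hq
      omega
    haveI : Fintype (Ybar ⧸ Sub) := Fintype.ofFinite _
    rw [Nat.card_eq_fintype_card, card_eq_pow_finrank (K := F) (V := Ybar ⧸ Sub), hfrQ,
      pow_one]
  · -- part 2
    rintro X' ⟨a, rfl⟩
    have hchar : ∀ Y'' : Submodule F (Fin n ⊕ Unit → F),
        ((∃ c, Y'' = actH c Y) ∧ actH a X < Y'' ∧
          finrank F ↥Y'' = finrank F ↥(actH a X) + 1) ↔ Y'' = actH a Y := by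
      intro Y''
      constructor
      · rintro ⟨⟨c, rfl⟩, hlt', -⟩
        have hmem := (hkey a c).mp hlt'.le
        have hfix : actH (c - a) Y = Y := actH_eq_of_mem hmem
        calc actH c Y = actH a (actH (c - a) Y) := by
              rw [actH_actH, show a + (c - a) = c by abel]
          _ = actH a Y := by rw [hfix]
      · rintro rfl
        refine ⟨⟨a, rfl⟩, ?_, ?_⟩
        · refine lt_of_le_of_ne ((hkey a a).mpr ?_) (hne0 a a)
          simp only [sub_self]
          rw [map_zero]
          exact Y.zero_mem
        · rw [finrank_actH, finrank_actH, hrk]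
    rw [Nat.card_congr (Equiv.subtypeEquivRight hchar)]
    rw [Nat.card_eq_one_iff_unique]
    exact ⟨⟨fun s t => Subtype.ext (s.2.trans t.2.symm)⟩, ⟨⟨actH a Y, rfl⟩⟩⟩
end

section
/- For every nontrivial degree-one character χ of H(n+1,q) ≅ (F_q^n, +) and every 1 ≤ k ≤ n+1, the multiplicity of χ in the permutation representation of H(n+1,q) on the set of k-dimensional subspaces of F_q^{n+1} not contained in F_q^n equals the Gaussian binomial coefficient [n−1 choose k−1]_q. -/
def gaussBinom (q : ℕ) : ℕ → ℕ → ℕ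
  | _, 0 => 1
  | 0, _ + 1 => 0
  | n + 1, k + 1 => gaussBinom q n k + q ^ (k + 1) * gaussBinom q n (k + 1)

@[simp] lemma gaussBinom_zero (q n : ℕ) : gaussBinom q n 0 = 1 := by cases n <;> rfl

lemma gaussBinom_eq_zero (q : ℕ) : ∀ n k, n < k → gaussBinom q n k = 0 := by
  intro n
  induction n with
  | zero => intro k hk; match k, hk with
    | k + 1, _ => rfl
  | succ n ih =>
    intro k hk
    match k, hk with
    | k + 1, hk =>
      show gaussBinom q n k + q ^ (k+1) * gaussBinom q n (k+1) = 0
      rw [ih k (by omega), ih (k+1) (by omega)]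
      ring

lemma gaussBinom_pascalB (q : ℕ) : ∀ n k,
    gaussBinom q (n + 1) (k + 1) = q ^ (n - k) * gaussBinom q n k + gaussBinom q n (k + 1) := by
  intro n
  induction n with
  | zero =>
    intro k
    match k with
    | 0 => simp [gaussBinom]
    | k + 1 =>
      rw [gaussBinom_eq_zero q 1 (k+2) (by omega), gaussBinom_eq_zero q 0 (k+1) (by omega),
        gaussBinom_eq_zero q 0 (k+2) (by omega)]
      ring
  | succ n ih =>
    intro k
    match k with
    | 0 =>
      calc gaussBinom q (n+2) 1 = 1 + q * gaussBinom q (n+1) 1 := by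
            show gaussBinom q (n+1) 0 + q^1 * gaussBinom q (n+1) 1 = _
            rw [gaussBinom_zero]; ring
        _ = 1 + q * (q ^ (n-0) * gaussBinom q n 0 + gaussBinom q n 1) := by rw [ih 0]
        _ = q ^ (n+1) + (gaussBinom q n 0 + q^1 * gaussBinom q n 1) := by
            rw [gaussBinom_zero]; norm_num; ring
        _ = q ^ (n+1-0) * gaussBinom q (n+1) 0 + gaussBinom q (n+1) 1 := by
            show _ = q ^ (n+1-0) * gaussBinom q (n+1) 0 + (gaussBinom q n 0 + q^1 * gaussBinom q n 1)
            rw [gaussBinom_zero, gaussBinom_zero]; norm_num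
    | k + 1 =>
      rcases lt_trichotomy (k+1) n with hkn | hkn | hkn
      case inl | inr.inl =>
        have hkn' : k + 1 ≤ n := by omega
        set A := gaussBinom q n k with hA
        set B := gaussBinom q n (k+1) with hB
        set C := gaussBinom q n (k+2) with hC
        have h3 : q^(k+2) * q^(n-(k+1)) = q^(n-k) * q^(k+1) := by
          rw [← pow_add, ← pow_add]; congr 1; omega
        have h2 : n+1-(k+1) = n-k := by omega
        calc gaussBinom q (n+2) (k+2)
            = gaussBinom q (n+1) (k+1) + q^(k+2) * gaussBinom q (n+1) (k+2) := rfl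
          _ = (q^(n-k) * A + B) + q^(k+2) * (q^(n-(k+1)) * B + C) := by rw [ih k, ih (k+1)]
          _ = q^(n-k) * A + B + (q^(k+2) * q^(n-(k+1))) * B + q^(k+2) * C := by ring
          _ = q^(n-k) * A + B + (q^(n-k) * q^(k+1)) * B + q^(k+2) * C := by rw [h3]
          _ = q^(n-k) * (A + q^(k+1) * B) + (B + q^(k+2) * C) := by ring
          _ = q^(n+1-(k+1)) * gaussBinom q (n+1) (k+1) + gaussBinom q (n+1) (k+2) := by
              rw [h2]; rfl
      case inr.inr =>
        rcases eq_or_lt_of_le (by omega : n ≤ k) with heq | hlt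
        · subst heq
          have e0 : gaussBinom q (n+1) (n+2) = 0 := gaussBinom_eq_zero q (n+1) (n+2) (by omega)
          calc gaussBinom q (n+2) (n+2)
              = gaussBinom q (n+1) (n+1) + q^(n+2) * gaussBinom q (n+1) (n+2) := rfl
            _ = q^(n+1-(n+1)) * gaussBinom q (n+1) (n+1) + gaussBinom q (n+1) (n+2) := by
                rw [e0]; simp
        · rw [gaussBinom_eq_zero q (n+1) (k+2) (by omega),
            gaussBinom_eq_zero q (n+1+1) (k+1+1) (by omega),
            gaussBinom_eq_zero q (n+1) (k+1) (by omega)]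
          ring


section Act
variable {F : Type} [Field F] {n : ℕ}

def iota : (Fin n → F) →ₗ[F] (Fin n ⊕ Unit → F) where
  toFun a := Sum.elim a (fun _ => 0)
  map_add' a b := by funext i; cases i <;> simp
  map_smul' c a := by funext i; cases i <;> simp

@[simp] lemma iota_inl (a : Fin n → F) (i : Fin n) : iota a (Sum.inl i) = a i := rfl
@[simp] lemma iota_inr (a : Fin n → F) (u : Unit) : iota a (Sum.inr u) = 0 := rfl

lemma iota_injective : Function.Injective (iota : (Fin n → F) →ₗ[F] _) := by
  intro a b h
  funext i
  have := congrFun h (Sum.inl i)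
  simpa using this

lemma hmat_mulVec (a : Fin n → F) (x : Fin n ⊕ Unit → F) :
    Matrix.mulVecLin (Hmat a) x = x + x (Sum.inr ()) • iota a := by
  funext i
  rw [Matrix.mulVecLin_apply]
  cases i with
  | inl i =>
    simp [Hmat, Matrix.mulVec, dotProduct, Fintype.sum_sum_type,
      Matrix.fromBlocks, Matrix.one_apply, Finset.sum_ite_eq]
    ring
  | inr u =>
    cases u
    simp [Hmat, Matrix.mulVec, dotProduct, Fintype.sum_sum_type,
      Matrix.fromBlocks, Matrix.one_apply]

lemma mem_hyp_iff (x : Fin n ⊕ Unit → F) :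
    x ∈ LinearMap.ker (LinearMap.proj (R := F) (Sum.inr () : Fin n ⊕ Unit)) ↔
      x (Sum.inr ()) = 0 := by
  rw [LinearMap.mem_ker, LinearMap.proj_apply]

lemma actH_fixed_iff (a : Fin n → F) (X : Submodule F (Fin n ⊕ Unit → F))
    (hX : ¬ X ≤ LinearMap.ker (LinearMap.proj (R := F) (Sum.inr () : Fin n ⊕ Unit))) :
    actH a X = X ↔ iota a ∈ X := by
  constructor
  · intro h
    obtain ⟨x, hxX, hxH⟩ := SetLike.not_le_iff_exists.mp hX
    have hc : x (Sum.inr ()) ≠ 0 := fun h0 => hxH ((mem_hyp_iff x).mpr h0)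
    have h1 : Matrix.mulVecLin (Hmat a) x ∈ X := by
      rw [← h]; exact Submodule.mem_map_of_mem hxX
    rw [hmat_mulVec] at h1
    have h2 : x (Sum.inr ()) • iota a ∈ X := by
      have := X.sub_mem h1 hxX
      simpa using this
    have := X.smul_mem (x (Sum.inr ()))⁻¹ h2
    rwa [inv_smul_smul₀ hc] at this
  · intro ha
    apply le_antisymm
    · rintro _ ⟨x, hx, rfl⟩
      rw [hmat_mulVec]
      exact X.add_mem hx (X.smul_mem _ ha)
    · intro x hx
      refine ⟨x - x (Sum.inr ()) • iota a, X.sub_mem hx (X.smul_mem _ ha), ?_⟩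
      rw [hmat_mulVec]
      have h1 : (x - x (Sum.inr ()) • iota a) (Sum.inr ()) = x (Sum.inr ()) := by
        simp
      rw [h1]
      abel
end Act


open Module

section Count
variable {F : Type} [Field F] [Fintype F] {V : Type} [AddCommGroup V] [Module F V] [Finite V]

instance finiteSubmodule : Finite (Submodule F V) :=
  Finite.of_injective (fun W => (W : Set V)) SetLike.coe_injective

instance : Module.Finite F V := Module.finite_iff_finite.mpr inferInstance

lemma nat_card_sigma {ι : Type*} [Fintype ι] (f : ι → Type*) [∀ i, Finite (f i)] :
    Nat.card (Σ i, f i) = ∑ i : ι, Nat.card (f i) := by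
  letI : ∀ i, Fintype (f i) := fun i => Fintype.ofFinite (f i)
  rw [Nat.card_eq_fintype_card, Fintype.card_sigma]
  exact Finset.sum_congr rfl fun i _ => by rw [Nat.card_eq_fintype_card]

lemma nat_card_submodule (W : Submodule F V) :
    Nat.card ↥W = Fintype.card F ^ finrank F ↥W := by
  letI : Fintype ↥W := Fintype.ofFinite _
  rw [Nat.card_eq_fintype_card]; exact card_eq_pow_finrank

variable (π : V →ₗ[F] F) (v : V)

lemma recon_lemma (hπv : π v = 1) (X : Submodule F V) (b : V)
    (hbH : b ∈ LinearMap.ker π) (hbX : b + v ∈ X) :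
    (X ⊓ LinearMap.ker π) ⊔ (F ∙ (b + v)) = X := by
  have h1 : π (b + v) = 1 := by simp [LinearMap.mem_ker.mp hbH, hπv]
  apply le_antisymm
  · exact sup_le inf_le_left ((Submodule.span_singleton_le_iff_mem _ _).mpr hbX)
  · intro u hu
    have h2 : u - π u • (b + v) ∈ X ⊓ LinearMap.ker π := by
      refine ⟨X.sub_mem hu (X.smul_mem _ hbX), LinearMap.mem_ker.mpr ?_⟩
      rw [map_sub, map_smul, h1, smul_eq_mul, mul_one, sub_self]
    have h3 : π u • (b + v) ∈ (F ∙ (b + v)) :=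
      Submodule.smul_mem _ _ (Submodule.mem_span_singleton_self _)
    have := Submodule.add_mem_sup h2 h3
    simpa using this

lemma inf_lemma (hπv : π v = 1) (W : Submodule F V) (hW : W ≤ LinearMap.ker π) (b : V)
    (hbH : b ∈ LinearMap.ker π) :
    (W ⊔ (F ∙ (b + v))) ⊓ LinearMap.ker π = W := by
  have h1 : π (b + v) = 1 := by simp [LinearMap.mem_ker.mp hbH, hπv]
  apply le_antisymm
  · rintro u ⟨hu1, hu2⟩
    obtain ⟨w, hw, s, hs, rfl⟩ := Submodule.mem_sup.mp hu1
    obtain ⟨c, rfl⟩ := Submodule.mem_span_singleton.mp hs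
    have hπw : π w = 0 := LinearMap.mem_ker.mp (hW hw)
    have : π (w + c • (b + v)) = c := by
      rw [map_add, map_smul, h1, hπw, smul_eq_mul, mul_one, zero_add]
    have hc : c = 0 := by rw [← this]; exact LinearMap.mem_ker.mp hu2
    simpa [hc] using hw
  · exact le_inf le_sup_left hW

lemma rank_lemma (hπv : π v = 1) (W : Submodule F V) (hW : W ≤ LinearMap.ker π) (b : V)
    (hbH : b ∈ LinearMap.ker π) :
    finrank F ↥(W ⊔ (F ∙ (b + v))) = finrank F ↥W + 1 := by
  have h1 : π (b + v) = 1 := by simp [LinearMap.mem_ker.mp hbH, hπv]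
  have hne : b + v ≠ 0 := by intro h; rw [h] at h1; simp at h1
  have hinf : W ⊓ (F ∙ (b + v)) = ⊥ := by
    rw [eq_bot_iff]
    rintro u ⟨hu1, hu2⟩
    obtain ⟨c, rfl⟩ := Submodule.mem_span_singleton.mp hu2
    have : π (c • (b + v)) = c := by rw [map_smul, h1, smul_eq_mul, mul_one]
    have hc : c = 0 := by rw [← this]; exact LinearMap.mem_ker.mp (hW hu1)
    simp [hc]
  have := Submodule.finrank_sup_add_finrank_inf_eq W (F ∙ (b + v))
  rw [hinf, finrank_span_singleton hne] at this
  simpa using this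

/-- Main counting lemma. -/
lemma count_lemma (hπv : π v = 1) (Q : Submodule F V → Prop) (j : ℕ) :
    Nat.card {X : Submodule F V // finrank F ↥X = j + 1 ∧ ¬ X ≤ LinearMap.ker π ∧
        Q (X ⊓ LinearMap.ker π)} * Fintype.card F ^ j
    = Nat.card {W : Submodule F V // finrank F ↥W = j ∧ W ≤ LinearMap.ker π ∧ Q W} *
        Fintype.card F ^ finrank F ↥(LinearMap.ker π) := by
  classical
  set H := LinearMap.ker π with hH
  -- choice of base point in X
  have exists_b0 : ∀ X : Submodule F V, ¬ X ≤ H → ∃ b₀, b₀ ∈ H ∧ b₀ + v ∈ X := by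
    intro X hX
    obtain ⟨x, hxX, hxH⟩ := SetLike.not_le_iff_exists.mp hX
    have hπx : π x ≠ 0 := fun h => hxH (LinearMap.mem_ker.mpr h)
    refine ⟨(π x)⁻¹ • x - v, ?_, ?_⟩
    · apply LinearMap.mem_ker.mpr
      simp [map_sub, map_smul, hπv, inv_mul_cancel₀ hπx]
    · simpa using X.smul_mem (π x)⁻¹ hxX
  -- the map Φ
  set Wt := {W : Submodule F V // finrank F ↥W = j ∧ W ≤ H ∧ Q W} with hWt
  set Xt := {X : Submodule F V // finrank F ↥X = j + 1 ∧ ¬ X ≤ H ∧ Q (X ⊓ H)} with hXt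
  have key : ∀ (W : Submodule F V), finrank F ↥W = j → W ≤ H → Q W → ∀ b ∈ H,
      finrank F ↥(W ⊔ (F ∙ (b + v))) = j + 1 ∧ ¬ (W ⊔ (F ∙ (b + v))) ≤ H ∧
        Q ((W ⊔ (F ∙ (b + v))) ⊓ H) := by
    intro W hrk hle hQ b hb
    have h1 : π (b + v) = 1 := by simp [LinearMap.mem_ker.mp hb, hπv]
    refine ⟨by rw [rank_lemma π v hπv W hle b hb, hrk], ?_, ?_⟩
    · intro hc
      have : b + v ∈ H := hc (Submodule.mem_sup_right (Submodule.mem_span_singleton_self _))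
      rw [LinearMap.mem_ker.mp this] at h1; simp at h1
    · rw [inf_lemma π v hπv W hle b hb]; exact hQ
  let Φ : Wt × ↥H → Xt := fun p =>
    ⟨p.1.1 ⊔ (F ∙ ((p.2 : V) + v)), key p.1.1 p.1.2.1 p.1.2.2.1 p.1.2.2.2 p.2 p.2.2⟩
  -- fibers of Φ
  have fib : ∀ X : Xt, Nat.card {p : Wt × ↥H // Φ p = X} = Fintype.card F ^ j := by
    intro X
    obtain ⟨b₀, hb₀H, hb₀X⟩ := exists_b0 X.1 X.2.2.1
    have hrecon : (X.1 ⊓ H) ⊔ (F ∙ (b₀ + v)) = X.1 := recon_lemma π v hπv X.1 b₀ hb₀H hb₀X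
    have hrkinf : finrank F ↥(X.1 ⊓ H) = j := by
      have := rank_lemma π v hπv (X.1 ⊓ H) inf_le_right b₀ hb₀H
      rw [hrecon, X.2.1] at this
      omega
    have hQinf : Q (X.1 ⊓ H) := X.2.2.2
    -- fiber ≃ X ⊓ H
    have e : {p : Wt × ↥H // Φ p = X} ≃ ↥(X.1 ⊓ H) := by
      refine ⟨fun p => ⟨(p.1.2 : V) - b₀, ?_, ?_⟩, fun c =>
        ⟨(⟨⟨X.1 ⊓ H, hrkinf, inf_le_right, hQinf⟩, ⟨b₀ + (c : V), H.add_mem hb₀H c.2.2⟩⟩ : Wt × ↥H), ?_⟩,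
        ?_, ?_⟩
      · -- membership in X.1
        have h1 : (p.1.2 : V) + v ∈ (Φ p.1).1 :=
          Submodule.mem_sup_right (Submodule.mem_span_singleton_self _)
        rw [p.2] at h1
        have h2 : b₀ + v ∈ X.1 := hb₀X
        have := X.1.sub_mem h1 h2
        simpa using this
      · exact H.sub_mem p.1.2.2 hb₀H
      · -- Φ of the constructed pair = X
        apply Subtype.ext
        show (X.1 ⊓ H) ⊔ (F ∙ ((b₀ + (c : V)) + v)) = X.1
        have hcH : (c : V) ∈ H := c.2.2
        have hcX : (c : V) ∈ X.1 := c.2.1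
        have : (b₀ + (c : V)) + v ∈ X.1 := by
          have h' := X.1.add_mem hb₀X hcX
          rwa [show b₀ + (c : V) + v = b₀ + v + (c : V) by abel]
        exact recon_lemma π v hπv X.1 (b₀ + (c : V)) (H.add_mem hb₀H hcH) this
      · -- left inverse
        rintro ⟨⟨⟨W, hW⟩, b⟩, hp⟩
        have hWX : W = X.1 ⊓ H := by
          have := inf_lemma π v hπv W hW.2.1 (b : V) b.2
          have hphi : (W ⊔ (F ∙ ((b : V) + v))) = X.1 := congrArg Subtype.val hp
          rw [hphi] at this
          exact this.symm
        apply Subtype.ext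
        apply Prod.ext
        · exact Subtype.ext hWX.symm
        · apply Subtype.ext; show b₀ + ((b : V) - b₀) = (b : V); abel
      · intro c
        apply Subtype.ext
        show (b₀ + (c : V)) - b₀ = (c : V)
        abel
    rw [Nat.card_congr e, nat_card_submodule, hrkinf]
  -- count both sides
  letI : Fintype Xt := Fintype.ofFinite _
  have h2 : Nat.card Wt * Fintype.card F ^ finrank F ↥H =
      Nat.card Xt * Fintype.card F ^ j := by
    calc Nat.card Wt * Fintype.card F ^ finrank F ↥H
        = Nat.card Wt * Nat.card ↥H := by rw [nat_card_submodule]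
      _ = Nat.card (Wt × ↥H) := (Nat.card_prod _ _).symm
      _ = Nat.card (Σ X : Xt, {p : Wt × ↥H // Φ p = X}) :=
          Nat.card_congr (Equiv.sigmaFiberEquiv Φ).symm
      _ = ∑ X : Xt, Nat.card {p : Wt × ↥H // Φ p = X} := nat_card_sigma _
      _ = ∑ _X : Xt, Fintype.card F ^ j := Finset.sum_congr rfl fun X _ => fib X
      _ = Nat.card Xt * Fintype.card F ^ j := by
          rw [Finset.sum_const, Finset.card_univ, smul_eq_mul, Nat.card_eq_fintype_card]
  exact h2.symm
end Count

section Count2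
variable {F : Type} [Field F] [Fintype F]

lemma nat_card_split {α : Type*} [Finite α] (P Q : α → Prop) :
    Nat.card {x : α // P x} =
      Nat.card {x : α // P x ∧ Q x} + Nat.card {x : α // P x ∧ ¬ Q x} := by
  classical
  have e1 : {x : α // P x ∧ Q x} ≃ {y : {x : α // P x} // Q y.1} :=
    (Equiv.subtypeSubtypeEquivSubtypeInter P Q).symm
  have e2 : {x : α // P x ∧ ¬ Q x} ≃ {y : {x : α // P x} // ¬ Q y.1} :=
    (Equiv.subtypeSubtypeEquivSubtypeInter P (fun x => ¬ Q x)).symm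
  rw [Nat.card_congr e1, Nat.card_congr e2, ← Nat.card_sum]
  exact (Nat.card_congr (Equiv.sumCompl _)).symm

/-- Subspaces of a submodule `H` correspond to subspaces contained in `H`,
preserving rank and an extra predicate. -/
lemma nat_card_sub_eq {V : Type} [AddCommGroup V] [Module F V] [Finite V]
    (H : Submodule F V) (j : ℕ) (Q : Submodule F V → Prop) :
    Nat.card {X : Submodule F V // finrank F ↥X = j ∧ X ≤ H ∧ Q X} =
      Nat.card {Y : Submodule F ↥H // finrank F ↥Y = j ∧ Q (Submodule.map H.subtype Y)} := by
  have hmc : ∀ X : Submodule F V, X ≤ H →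
      Submodule.map H.subtype (Submodule.comap H.subtype X) = X := by
    intro X hle
    rw [Submodule.map_comap_eq, Submodule.range_subtype, inf_eq_right.mpr hle]
  apply Nat.card_congr
  refine ⟨fun X => ⟨Submodule.comap H.subtype X.1, ?_, ?_⟩,
    fun Y => ⟨Submodule.map H.subtype Y.1, ?_, ?_, ?_⟩, ?_, ?_⟩
  · have h := Submodule.finrank_map_subtype_eq H (Submodule.comap H.subtype X.1)
    rw [hmc X.1 X.2.2.1] at h
    rw [← h]; exact X.2.1
  · rw [hmc X.1 X.2.2.1]; exact X.2.2.2
  · rw [Submodule.finrank_map_subtype_eq]; exact Y.2.1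
  · exact Submodule.map_subtype_le H Y.1
  · exact Y.2.2
  · intro X
    apply Subtype.ext
    exact hmc X.1 X.2.2.1
  · intro Y
    apply Subtype.ext
    exact Submodule.comap_map_eq_of_injective (Submodule.injective_subtype H) Y.1

lemma card_grassmannian : ∀ (m : ℕ) (V : Type) [AddCommGroup V] [Module F V] [Finite V],
    finrank F V = m → ∀ j : ℕ,
    Nat.card {X : Submodule F V // finrank F ↥X = j} = gaussBinom (Fintype.card F) m j := by
  intro m
  induction m with
  | zero =>
    intro V _ _ _ hm j
    match j with
    | 0 =>
      haveI : Unique {X : Submodule F V // finrank F ↥X = 0} := by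
        refine ⟨⟨⟨⊥, by simp⟩⟩, ?_⟩
        rintro ⟨X, hX⟩
        have : X = ⊥ := Submodule.finrank_eq_zero.mp hX
        simp [this]
      simp [Nat.card_unique, gaussBinom]
    | j + 1 =>
      rw [gaussBinom_eq_zero _ 0 (j+1) (by omega)]
      rw [Nat.card_eq_zero]
      left
      rw [isEmpty_subtype]
      intro X
      have := Submodule.finrank_le X
      omega
  | succ m ih =>
    intro V _ _ _ hm j
    match j with
    | 0 =>
      haveI : Unique {X : Submodule F V // finrank F ↥X = 0} := by
        refine ⟨⟨⟨⊥, by simp⟩⟩, ?_⟩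
        rintro ⟨X, hX⟩
        have : X = ⊥ := Submodule.finrank_eq_zero.mp hX
        simp [this]
      simp [Nat.card_unique, gaussBinom]
    | j + 1 =>
      -- construct the functional
      have b : Basis (Fin (m+1)) F V := Module.finBasisOfFinrankEq F V hm
      set π : V →ₗ[F] F := b.coord 0 with hπ
      have hπv : π (b 0) = 1 := by simp [hπ]
      set H := LinearMap.ker π with hH
      have hsurj : Function.Surjective π := fun c => ⟨c • b 0, by simp [map_smul, hπv]⟩
      have hrkH : finrank F ↥H = m := by
        have h1 := LinearMap.finrank_range_add_finrank_ker π
        rw [LinearMap.range_eq_top.mpr hsurj, finrank_top, Module.finrank_self, hm] at h1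
        rw [hH]
        omega
      -- split
      have hsplit := nat_card_split (fun X : Submodule F V => finrank F ↥X = j + 1)
        (fun X => X ≤ H)
      -- those inside H
      have h1 : Nat.card {X : Submodule F V // finrank F ↥X = j + 1 ∧ X ≤ H} =
          gaussBinom (Fintype.card F) m (j+1) := by
        have := nat_card_sub_eq H (j+1) (fun _ => True)
        simp only [and_true] at this
        rw [this, ← ih ↥H hrkH (j+1)]
      -- those not inside H
      have h2 : Nat.card {X : Submodule F V // finrank F ↥X = j + 1 ∧ ¬ X ≤ H} *
            Fintype.card F ^ j =
          gaussBinom (Fintype.card F) m j * Fintype.card F ^ m := by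
        have hcl := count_lemma π (b 0) hπv (fun _ => True) j
        simp only [and_true] at hcl
        rw [← hH] at hcl
        rw [hcl, hrkH]
        congr 1
        have := nat_card_sub_eq H j (fun _ => True)
        simp only [and_true] at this
        rw [this, ← ih ↥H hrkH j]
      have h3 : Nat.card {X : Submodule F V // finrank F ↥X = j + 1 ∧ ¬ X ≤ H} =
          Fintype.card F ^ (m - j) * gaussBinom (Fintype.card F) m j := by
        rcases le_or_gt j m with hjm | hjm
        · have hq : (0:ℕ) < Fintype.card F ^ j := pow_pos Fintype.card_pos j
          apply Nat.eq_of_mul_eq_mul_right hq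
          rw [h2]
          rw [mul_comm (Fintype.card F ^ (m-j)) _, mul_assoc, ← pow_add]
          congr 2
          omega
        · rw [gaussBinom_eq_zero _ m j hjm] at h2 ⊢
          rw [zero_mul] at h2
          have hA := Nat.mul_eq_zero.mp h2
          have hq : Fintype.card F ^ j ≠ 0 := (pow_pos Fintype.card_pos j).ne'
          rcases hA with h | h
          · simp [h]
          · exact absurd h hq
      rw [hsplit, h1, h3, gaussBinom_pascalB]
      ring
end Count2


open Module

section Char
variable {F : Type} [Field F] [Fintype F] {n : ℕ}

lemma conj_char (χ : AddChar (Fin n → F) ℂ) (a : Fin n → F) :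
    (starRingEnd ℂ) (χ a) = χ (-a) := by
  have hcard : (Nat.card (Fin n → F)) ≠ 0 := Nat.card_pos.ne'
  have h2 : χ a ^ Nat.card (Fin n → F) = 1 := by
    rw [← AddChar.map_nsmul_eq_pow, card_nsmul_eq_zero', AddChar.map_zero_eq_one]
  have h3 : ‖χ a‖ = 1 := Complex.norm_eq_one_of_pow_eq_one h2 hcard
  have h1 : χ a * χ (-a) = 1 := by
    rw [← AddChar.map_add_eq_mul, add_neg_cancel, AddChar.map_zero_eq_one]
  rw [← Complex.inv_eq_conj h3]
  exact inv_eq_of_mul_eq_one_right h1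

/-- The maximal subspace on which `χ` is trivial. -/
def V0 (χ : AddChar (Fin n → F) ℂ) : Submodule F (Fin n → F) where
  carrier := {a | ∀ t : F, χ (t • a) = 1}
  zero_mem' := fun t => by rw [smul_zero, AddChar.map_zero_eq_one]
  add_mem' := by
    intro a b ha hb t
    rw [smul_add, AddChar.map_add_eq_mul, ha t, hb t, one_mul]
  smul_mem' := by
    intro c a ha t
    rw [smul_smul]
    exact ha (t * c)

lemma le_V0_iff (χ : AddChar (Fin n → F) ℂ) (U : Submodule F (Fin n → F)) :
    U ≤ V0 χ ↔ ∀ u ∈ U, χ u = 1 := by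
  constructor
  · intro h u hu
    have := h hu 1
    rwa [one_smul] at this
  · intro h a ha t
    exact h _ (U.smul_mem t ha)

/-- The additive character `t ↦ χ (t • a)` of `F`. -/
def phiChar (χ : AddChar (Fin n → F) ℂ) (a : Fin n → F) : AddChar F ℂ :=
  χ.compAddMonoidHom (AddMonoidHom.mk' (fun t => t • a) (fun s t => add_smul s t a))

@[simp] lemma phiChar_apply (χ : AddChar (Fin n → F) ℂ) (a : Fin n → F) (t : F) :
    phiChar χ a t = χ (t • a) := rfl

lemma nat_card_submodule' {V : Type} [AddCommGroup V] [Module F V] [Finite V]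
    (W : Submodule F V) : Nat.card ↥W = Fintype.card F ^ finrank F ↥W := by
  letI : Fintype ↥W := Fintype.ofFinite _
  rw [Nat.card_eq_fintype_card]; exact card_eq_pow_finrank

lemma finrank_V0 (χ : AddChar (Fin n → F) ℂ) (hχ : ∃ a, χ a ≠ 1) :
    finrank F ↥(V0 χ) = n - 1 := by
  classical
  have hmul : ∀ a b, phiChar χ (a + b) = phiChar χ a * phiChar χ b := by
    intro a b
    ext t
    rw [AddChar.mul_apply, phiChar_apply, phiChar_apply, phiChar_apply, smul_add,
      AddChar.map_add_eq_mul]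
  set Φ : (Fin n → F) →+ Additive (AddChar F ℂ) :=
    AddMonoidHom.mk' (fun a => Additive.ofMul (phiChar χ a))
      (fun a b => by rw [hmul]; rfl) with hΦ
  have hker : ∀ a, Φ a = 0 ↔ a ∈ V0 χ := by
    intro a
    rw [hΦ]
    show Additive.ofMul (phiChar χ a) = 0 ↔ _
    rw [ofMul_eq_zero, AddChar.eq_one_iff]
    exact ⟨fun h t => h t, fun h t => h t⟩
  -- cardinalities
  have h1 : Nat.card (Fin n → F) =
      Nat.card ((Fin n → F) ⧸ Φ.ker) * Nat.card Φ.ker :=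
    AddSubgroup.card_eq_card_quotient_mul_card_addSubgroup Φ.ker
  have h2 : Nat.card Φ.ker = Nat.card ↥(V0 χ) :=
    Nat.card_congr (Equiv.subtypeEquivRight fun a => by
      rw [AddMonoidHom.mem_ker, hker a])
  have h3 : Nat.card ((Fin n → F) ⧸ Φ.ker) = Nat.card Φ.range :=
    Nat.card_congr (QuotientAddGroup.quotientKerEquivRange Φ).toEquiv
  have h4 : Nat.card Φ.range ≤ Fintype.card F := by
    have hfin : Finite (Additive (AddChar F ℂ)) := by
      have : Finite (AddChar F ℂ) := Finite.of_fintype _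
      exact this
    calc Nat.card Φ.range ≤ Nat.card (Additive (AddChar F ℂ)) :=
          Nat.card_le_card_of_injective _ Subtype.val_injective
      _ = Nat.card (AddChar F ℂ) := Nat.card_congr Additive.toMul
      _ = Fintype.card F := by
          rw [Nat.card_eq_fintype_card, AddChar.card_eq]
  have h5 : Nat.card (Fin n → F) = Fintype.card F ^ n := by
    rw [Nat.card_eq_fintype_card, Fintype.card_fun]
    simp
  have h6 : Nat.card ↥(V0 χ) = Fintype.card F ^ finrank F ↥(V0 χ) := nat_card_submodule' _
  set d := finrank F ↥(V0 χ)
  have hq : 1 < Fintype.card F := Fintype.one_lt_card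
  -- d ≥ n - 1
  have hge : Fintype.card F ^ n ≤ Fintype.card F ^ (d + 1) := by
    rw [← h5, h1, h2, h3, h6, pow_succ]
    calc Nat.card Φ.range * Fintype.card F ^ d
        ≤ Fintype.card F * Fintype.card F ^ d :=
          Nat.mul_le_mul_right _ h4
      _ = Fintype.card F ^ d * Fintype.card F := mul_comm _ _
  have hge' : n ≤ d + 1 := (Nat.pow_le_pow_iff_right hq).mp hge
  -- d < n
  have hne : V0 χ ≠ ⊤ := by
    obtain ⟨a₀, ha₀⟩ := hχ
    intro h
    apply ha₀
    have : a₀ ∈ V0 χ := h ▸ Submodule.mem_top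
    have := this 1
    rwa [one_smul] at this
  have hd_le : d ≤ n := by
    have := Submodule.finrank_le (V0 χ)
    rwa [Module.finrank_fin_fun] at this
  have hd_ne : d ≠ n := by
    intro h
    apply hne
    apply Submodule.eq_top_of_finrank_eq
    show d = finrank F (Fin n → F)
    rw [h, Module.finrank_fin_fun]
  omega
lemma char_sum_U (χ : AddChar (Fin n → F) ℂ) (U : Submodule F (Fin n → F))
    [DecidablePred (· ∈ U)] [Decidable (U ≤ V0 χ)] :
    ∑ a : Fin n → F, (if a ∈ U then (starRingEnd ℂ) (χ a) else 0) =
      if U ≤ V0 χ then (Fintype.card F : ℂ) ^ finrank F ↥U else 0 := by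
  letI : Fintype ↥U := Fintype.ofFinite _
  have h0 : ∑ a : Fin n → F, (if a ∈ U then (starRingEnd ℂ) (χ a) else 0) =
      ∑ u : ↥U, (starRingEnd ℂ) (χ ↑u) := by
    rw [← Finset.sum_filter]
    exact Finset.sum_subtype _ (by simp) _
  rw [h0]
  have h1 : ∀ u : ↥U, (starRingEnd ℂ) (χ ↑u) = χ ↑(-u) := by
    intro u
    rw [conj_char χ ↑u]
    norm_cast
  rw [Finset.sum_congr rfl (fun u _ => h1 u)]
  have h2 : ∑ u : ↥U, χ ↑(-u) = ∑ u : ↥U, χ ↑u :=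
    Fintype.sum_equiv (Equiv.neg ↥U) _ _ (fun u => rfl)
  rw [h2]
  classical
  set ψ : AddChar ↥U ℂ := χ.compAddMonoidHom (U.subtype.toAddMonoidHom) with hψ
  have h3 : ∑ u : ↥U, χ ↑u = ∑ u : ↥U, ψ u := rfl
  rw [h3, AddChar.sum_eq_ite]
  have h4 : ψ = 0 ↔ U ≤ V0 χ := by
    rw [← AddChar.coe_eq_one, le_V0_iff]
    constructor
    · intro h u hu; exact congrFun h ⟨u, hu⟩
    · intro h; funext u; exact h ↑u u.2
  by_cases hU : U ≤ V0 χ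
  · rw [if_pos (h4.mpr hU), if_pos hU, card_eq_pow_finrank (K := F) (V := ↥U)]
    push_cast
    rfl
  · rw [if_neg (fun h => hU (h4.mp h)), if_neg hU]

end Char


set_option maxHeartbeats 1000000 in
/-- For every nontrivial degree-one character `χ` of `H(n+1, q) ≅ (F_q^n, +)` and
`1 ≤ k ≤ n+1`, the multiplicity `[χ, ψ_k]` of `χ` in the permutation representation of
`H(n+1, q)` on the `k`-dimensional subspaces of `F_q^{n+1}` not contained in `F_q^n`
equals `[n-1, k-1]_q`.  The multiplicity is computed by the character inner product
`(1/|H|) ∑_g conj(χ(g)) ψ_k(g)`, where `ψ_k(g)` is the number of fixed points of `g`. -/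
theorem multiplicity_nontrivial_char (F : Type) [Field F] [Fintype F] (n k : ℕ)
    (hn : 1 ≤ n) (hk1 : 1 ≤ k) (hk2 : k ≤ n + 1)
    (Hyp : Submodule F (Fin n ⊕ Unit → F))
    (hHyp : Hyp = LinearMap.ker (LinearMap.proj (R := F) (Sum.inr () : Fin n ⊕ Unit)))
    (χ : AddChar (Fin n → F) ℂ) (hχ : ∃ a : Fin n → F, χ a ≠ 1) :
    (1 / (Fintype.card F : ℂ) ^ n) *
        ∑ a : Fin n → F, (starRingEnd ℂ) (χ a) *
          (Nat.card {X : Submodule F (Fin n ⊕ Unit → F) //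
            Module.finrank F ↥X = k ∧ ¬ X ≤ Hyp ∧ actH a X = X} : ℂ) =
      (gaussBinom (Fintype.card F) (n - 1) (k - 1) : ℂ) := by
  classical
  subst hHyp
  set π : (Fin n ⊕ Unit → F) →ₗ[F] F := LinearMap.proj (Sum.inr ()) with hπdef
  set H : Submodule F (Fin n ⊕ Unit → F) := LinearMap.ker π with hHdef
  set v : Fin n ⊕ Unit → F := Sum.elim (fun _ => (0:F)) (fun _ => (1:F)) with hvdef
  have hπv : π v = 1 := rfl
  have hsurj : Function.Surjective π := fun c => ⟨c • v, mul_one c⟩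
  have hrkH : finrank F ↥H = n := by
    have h1 := LinearMap.finrank_range_add_finrank_ker π
    rw [LinearMap.range_eq_top.mpr hsurj, finrank_top, Module.finrank_self,
      Module.finrank_fintype_fun_eq_card, ← hHdef] at h1
    simp only [Fintype.card_sum, Fintype.card_fin, Fintype.card_unit] at h1
    omega
  have hiotaH : ∀ a : Fin n → F, iota a ∈ H := fun a => (mem_hyp_iff (iota a)).mpr rfl
  have hkm1 : k - 1 + 1 = k := by omega
  -- per-element fixed point count
  have key : ∀ a : Fin n → F,
      Nat.card {X : Submodule F (Fin n ⊕ Unit → F) //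
          finrank F ↥X = k ∧ ¬ X ≤ H ∧ actH a X = X} =
        Fintype.card F ^ (n - (k - 1)) *
          Nat.card {U : Submodule F (Fin n → F) // finrank F ↥U = k - 1 ∧ a ∈ U} := by
    intro a
    have e1 : Nat.card {X : Submodule F (Fin n ⊕ Unit → F) //
        finrank F ↥X = k ∧ ¬ X ≤ H ∧ actH a X = X} =
        Nat.card {X : Submodule F (Fin n ⊕ Unit → F) //
        finrank F ↥X = (k - 1) + 1 ∧ ¬ X ≤ H ∧ iota a ∈ X ⊓ H} := by
      apply Nat.card_congr
      apply Equiv.subtypeEquivRight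
      intro X
      rw [hkm1]
      constructor
      · rintro ⟨h1, h2, h3⟩
        refine ⟨h1, h2, Submodule.mem_inf.mpr ⟨?_, hiotaH a⟩⟩
        exact (actH_fixed_iff a X h2).mp h3
      · rintro ⟨h1, h2, h3⟩
        exact ⟨h1, h2, (actH_fixed_iff a X h2).mpr (Submodule.mem_inf.mp h3).1⟩
    have e2 := count_lemma π v hπv (fun W => iota a ∈ W) (k - 1)
    rw [← hHdef, hrkH] at e2
    have e3 : Nat.card {W : Submodule F (Fin n ⊕ Unit → F) //
        finrank F ↥W = k - 1 ∧ W ≤ H ∧ iota a ∈ W} =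
        Nat.card {U : Submodule F (Fin n → F) // finrank F ↥U = k - 1 ∧ a ∈ U} := by
      have hinj : Function.Injective (iota : (Fin n → F) →ₗ[F] _) := iota_injective
      have hrange : LinearMap.range (iota : (Fin n → F) →ₗ[F] _) = H := by
        apply le_antisymm
        · rintro x ⟨b, rfl⟩
          exact hiotaH b
        · intro x hx
          refine ⟨fun i => x (Sum.inl i), ?_⟩
          funext i
          cases i with
          | inl i => rfl
          | inr u =>
            cases u
            exact ((mem_hyp_iff x).mp hx).symm
      have hmc : ∀ W : Submodule F (Fin n ⊕ Unit → F), W ≤ H →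
          Submodule.map iota (Submodule.comap iota W) = W := by
        intro W hle
        rw [Submodule.map_comap_eq, hrange, inf_eq_right.mpr hle]
      have hrk : ∀ U : Submodule F (Fin n → F),
          finrank F ↥(Submodule.map iota U) = finrank F ↥U :=
        fun U => (LinearEquiv.finrank_eq (Submodule.equivMapOfInjective iota hinj U)).symm
      apply Nat.card_congr
      refine ⟨fun W => ⟨Submodule.comap iota W.1, ?_, ?_⟩,
        fun U => ⟨Submodule.map iota U.1, ?_, ?_, ?_⟩, ?_, ?_⟩
      · have h := hrk (Submodule.comap iota W.1)
        rw [hmc W.1 W.2.2.1] at h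
        rw [← h]; exact W.2.1
      · exact Submodule.mem_comap.mpr W.2.2.2
      · rw [hrk]; exact U.2.1
      · intro x hx
        obtain ⟨u, -, rfl⟩ := Submodule.mem_map.mp hx
        exact hiotaH u
      · exact Submodule.mem_map_of_mem U.2.2
      · intro W
        apply Subtype.ext
        exact hmc W.1 W.2.2.1
      · intro U
        apply Subtype.ext
        exact Submodule.comap_map_eq_of_injective hinj U.1
    have e4 : Fintype.card F ^ n =
        Fintype.card F ^ (n - (k - 1)) * Fintype.card F ^ (k - 1) := by
      rw [← pow_add]; congr 1; omega
    apply Nat.eq_of_mul_eq_mul_right (pow_pos (Fintype.card_pos (α := F)) (k - 1))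
    rw [e1, e2, e3, e4]
    ring
  -- the Grassmannian count in V0
  letI : Fintype (Submodule F (Fin n → F)) := Fintype.ofFinite _
  have hgauss : Nat.card {U : Submodule F (Fin n → F) //
      finrank F ↥U = k - 1 ∧ U ≤ V0 χ} =
      gaussBinom (Fintype.card F) (n - 1) (k - 1) := by
    have h2 := nat_card_sub_eq (V0 χ) (k-1) (fun _ => True)
    simp only [and_true] at h2
    rw [h2]
    exact card_grassmannian (n-1) ↥(V0 χ) (finrank_V0 χ hχ) (k-1)
  have hNC : ∀ a : Fin n → F,
      ((Nat.card {U : Submodule F (Fin n → F) // finrank F ↥U = k - 1 ∧ a ∈ U} : ℕ) : ℂ) =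
        ∑ U : Submodule F (Fin n → F),
          (if finrank F ↥U = k - 1 ∧ a ∈ U then (1:ℂ) else 0) := by
    intro a
    rw [Nat.card_eq_fintype_card, Fintype.card_subtype, Finset.card_filter]
    simp only [Nat.cast_sum, apply_ite (Nat.cast (R := ℂ)), Nat.cast_one, Nat.cast_zero]
  have inner : ∑ a : Fin n → F, (starRingEnd ℂ) (χ a) *
      (Nat.card {U : Submodule F (Fin n → F) // finrank F ↥U = k - 1 ∧ a ∈ U} : ℂ) =
      (Fintype.card F:ℂ)^(k-1) *
        (Nat.card {U : Submodule F (Fin n → F) // finrank F ↥U = k - 1 ∧ U ≤ V0 χ} : ℂ) := by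
    rw [Finset.sum_congr rfl (fun a _ => by rw [hNC a, Finset.mul_sum])]
    rw [Finset.sum_comm]
    have hU : ∀ U : Submodule F (Fin n → F),
        ∑ a : Fin n → F, (starRingEnd ℂ) (χ a) *
          (if finrank F ↥U = k - 1 ∧ a ∈ U then (1:ℂ) else 0) =
        if finrank F ↥U = k - 1 ∧ U ≤ V0 χ then (Fintype.card F:ℂ)^(k-1) else 0 := by
      intro U
      by_cases hP : finrank F ↥U = k - 1
      · have h1 : ∀ a : Fin n → F, (starRingEnd ℂ) (χ a) *
            (if finrank F ↥U = k - 1 ∧ a ∈ U then (1:ℂ) else 0)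
            = if a ∈ U then (starRingEnd ℂ) (χ a) else 0 := by
          intro a
          by_cases ha : a ∈ U <;> simp [hP, ha]
        rw [Finset.sum_congr rfl (fun a _ => h1 a), char_sum_U χ U]
        by_cases hV : U ≤ V0 χ
        · rw [if_pos hV, if_pos ⟨hP, hV⟩, hP]
        · rw [if_neg hV, if_neg (fun h => hV h.2)]
      · have h1 : ∀ a : Fin n → F, (starRingEnd ℂ) (χ a) *
            (if finrank F ↥U = k - 1 ∧ a ∈ U then (1:ℂ) else 0) = 0 := by
          intro a
          rw [if_neg (fun h => hP h.1), mul_zero]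
        rw [Finset.sum_congr rfl (fun a _ => h1 a), Finset.sum_const_zero,
          if_neg (fun h => hP h.1)]
    rw [Finset.sum_congr rfl (fun U _ => hU U)]
    rw [← Finset.sum_filter, Finset.sum_const, nsmul_eq_mul]
    rw [Nat.card_eq_fintype_card, Fintype.card_subtype]
    ring
  -- put everything together
  have hsum : ∑ a : Fin n → F, (starRingEnd ℂ) (χ a) *
      (Nat.card {X : Submodule F (Fin n ⊕ Unit → F) //
        finrank F ↥X = k ∧ ¬ X ≤ H ∧ actH a X = X} : ℂ) =
      (Fintype.card F : ℂ) ^ (n - (k - 1)) * ((Fintype.card F : ℂ) ^ (k - 1) *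
        (gaussBinom (Fintype.card F) (n - 1) (k - 1) : ℂ)) := by
    calc ∑ a : Fin n → F, (starRingEnd ℂ) (χ a) *
        (Nat.card {X : Submodule F (Fin n ⊕ Unit → F) //
          finrank F ↥X = k ∧ ¬ X ≤ H ∧ actH a X = X} : ℂ)
        = ∑ a : Fin n → F, (starRingEnd ℂ) (χ a) *
            ((Fintype.card F:ℂ) ^ (n - (k-1)) *
              (Nat.card {U : Submodule F (Fin n → F) //
                finrank F ↥U = k - 1 ∧ a ∈ U} : ℂ)) := by
          refine Finset.sum_congr rfl (fun a _ => ?_)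
          rw [key a]
          push_cast
          ring
      _ = (Fintype.card F:ℂ) ^ (n - (k-1)) * ∑ a : Fin n → F, (starRingEnd ℂ) (χ a) *
            (Nat.card {U : Submodule F (Fin n → F) //
              finrank F ↥U = k - 1 ∧ a ∈ U} : ℂ) := by
          rw [Finset.mul_sum]
          exact Finset.sum_congr rfl (fun a _ => by ring)
      _ = (Fintype.card F : ℂ) ^ (n - (k - 1)) * ((Fintype.card F : ℂ) ^ (k - 1) *
          (gaussBinom (Fintype.card F) (n - 1) (k - 1) : ℂ)) := by
          rw [inner, hgauss]
  rw [hsum]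
  have hqne : (Fintype.card F : ℂ) ≠ 0 := Nat.cast_ne_zero.mpr Fintype.card_ne_zero
  rw [show (Fintype.card F:ℂ)^(n-(k-1)) * ((Fintype.card F:ℂ)^(k-1) *
      (gaussBinom (Fintype.card F) (n - 1) (k - 1) : ℂ)) =
      (Fintype.card F:ℂ)^n * (gaussBinom (Fintype.card F) (n - 1) (k - 1) : ℂ) by
    rw [← mul_assoc, ← pow_add, show n-(k-1)+(k-1) = n by omega]]
  rw [one_div, inv_mul_cancel_left₀ (pow_ne_zero _ hqne)]
end
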